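/- Let A₀ ∈ ℝⁿˣⁿ, B₀ ∈ ℝⁿˣ¹, R ∈ ℝ positive (scalar case m=1), and suppose Θ = Θᵀ ≻ 0 solves the Riccati equation A₀ᵀΘ + ΘA₀ − ΘB₀R⁻¹B₀ᵀΘ = −Q with Q = Q₀ + R‖G‖-scaled term, specifically Q = Q₀ + ‖R^{1/2}‖² GᵀG for some matrix G and Q₀ ≻ 0. Consider ẋ = A₀x + ΔB(t,x)p + B₀(p + h(t,x)) with feedback p = −R⁻¹B₀ᵀΘx, where ΔB(t,x) = β(t,x)B₀ with β(t,x) ≥ 0, and ‖h(t,x)‖ ≤ ‖Gx‖ for all t, x. Then V(x) = xᵀΘx satisfies V̇ ≤ −xᵀQ₀x ≤ −λ_min(Q₀)‖x‖² along all solutions, hence the origin is globally exponentially stable. -/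

import Mathlib

open Matrix

lemma dv_vecMulVec {n : ℕ} (u w z : Fin n → ℝ) :
    z ⬝ᵥ (vecMulVec u w).mulVec z = (u ⬝ᵥ z) * (w ⬝ᵥ z) := by
  simp only [vecMulVec, mulVec, dotProduct, of_apply, Finset.mul_sum, Finset.sum_mul]
  rw [Finset.sum_comm]
  congr 1; ext i; congr 1; ext j; ring

lemma symm_dot {n : ℕ} {Θ : Matrix (Fin n) (Fin n) ℝ} (hΘs : Θ.IsSymm)
    (a b : Fin n → ℝ) : a ⬝ᵥ Θ.mulVec b = b ⬝ᵥ Θ.mulVec a := by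
  rw [dotProduct_mulVec]
  conv_lhs => rw [← hΘs]
  rw [vecMul_transpose, dotProduct_comm]

lemma quad_deriv {n : ℕ} (Θ : Matrix (Fin n) (Fin n) ℝ) (x : ℝ → Fin n → ℝ)
    (v : Fin n → ℝ) (t : ℝ) (hx : HasDerivAt x v t) :
    HasDerivAt (fun s => x s ⬝ᵥ Θ.mulVec (x s))
      (v ⬝ᵥ Θ.mulVec (x t) + x t ⬝ᵥ Θ.mulVec v) t := by
  have hc : ∀ i, HasDerivAt (fun s => x s i) (v i) t := hasDerivAt_pi.mp hx
  have h1 : ∀ i, HasDerivAt (fun s => ∑ j, Θ i j * x s j) (∑ j, Θ i j * v j) t :=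
    fun i => HasDerivAt.fun_sum fun j _ => (hc j).const_mul (Θ i j)
  have h2 : HasDerivAt (fun s => ∑ i, x s i * ∑ j, Θ i j * x s j)
      (∑ i, (v i * (∑ j, Θ i j * x t j) + x t i * (∑ j, Θ i j * v j))) t :=
    HasDerivAt.fun_sum fun i _ => (hc i).mul (h1 i)
  convert h2 using 1
  · simp [dotProduct, mulVec, Finset.sum_add_distrib]
  · simp [dotProduct, mulVec, Finset.sum_add_distrib]

lemma quad_bounds {n : ℕ} (Θ : Matrix (Fin n) (Fin n) ℝ) (hΘ : Θ.PosDef) :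
    ∃ c1 c2 : ℝ, 0 < c1 ∧ 0 < c2 ∧ ∀ z : Fin n → ℝ,
      c1 * ∑ i, z i ^ 2 ≤ z ⬝ᵥ Θ.mulVec z ∧ z ⬝ᵥ Θ.mulVec z ≤ c2 * ∑ i, z i ^ 2 := by
  rcases Nat.eq_zero_or_pos n with hn | hn
  · subst hn
    refine ⟨1, 1, one_pos, one_pos, fun z => ?_⟩
    simp [dotProduct]
  · set S : (Fin n → ℝ) → ℝ := fun z => ∑ i, z i ^ 2 with hS
    set f : (Fin n → ℝ) → ℝ := fun z => z ⬝ᵥ Θ.mulVec z with hf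
    have hScont : Continuous S :=
      continuous_finset_sum _ fun i _ => (continuous_apply i).pow 2
    have hfcont : Continuous f := by
      have : f = fun z => ∑ i, z i * ∑ j, Θ i j * z j := by
        funext z; simp [hf, dotProduct, mulVec]
      rw [this]
      exact continuous_finset_sum _ fun i _ => (continuous_apply i).mul
        (continuous_finset_sum _ fun j _ => continuous_const.mul (continuous_apply j))
    have hSnonneg : ∀ z, 0 ≤ S z := fun z => Finset.sum_nonneg fun i _ => sq_nonneg _
    set K : Set (Fin n → ℝ) := S ⁻¹' {1} with hK
    have hKclosed : IsClosed K := IsClosed.preimage hScont isClosed_singleton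
    have hKsub : K ⊆ Metric.closedBall 0 1 := by
      intro z hz
      have hz1 : S z = 1 := hz
      rw [Metric.mem_closedBall, dist_zero_right]
      rw [pi_norm_le_iff_of_nonneg zero_le_one]
      intro i
      rw [Real.norm_eq_abs, abs_le]
      have h1 : z i ^ 2 ≤ 1 := by
        rw [← hz1]
        exact Finset.single_le_sum (f := fun i => z i ^ 2) (fun j _ => sq_nonneg _)
          (Finset.mem_univ i)
      constructor <;> nlinarith
    have hKcomp : IsCompact K :=
      (isCompact_closedBall (0 : Fin n → ℝ) 1).of_isClosed_subset hKclosed hKsub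
    have hKne : K.Nonempty := by
      refine ⟨Pi.single ⟨0, hn⟩ 1, ?_⟩
      show S _ = 1
      rw [hS]
      simp only [Pi.single_apply]
      rw [Finset.sum_eq_single ⟨0, hn⟩]
      · simp
      · intro b _ hb; simp [hb]
      · simp
    obtain ⟨z1, hz1K, hz1⟩ := hKcomp.exists_isMinOn hKne hfcont.continuousOn
    obtain ⟨z2, hz2K, hz2⟩ := hKcomp.exists_isMaxOn hKne hfcont.continuousOn
    have hz1ne : z1 ≠ 0 := by
      intro h0
      have : S z1 = 1 := hz1K
      rw [h0] at this
      simp [hS] at this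
    have hc1pos : 0 < f z1 := by
      have := hΘ.dotProduct_mulVec_pos hz1ne
      simpa [hf] using this
    have hc2pos : 0 < f z2 := lt_of_lt_of_le hc1pos (hz1 hz2K)
    refine ⟨f z1, f z2, hc1pos, hc2pos, fun z => ?_⟩
    rcases eq_or_lt_of_le (hSnonneg z) with hz0 | hzpos
    · have hz' : z = 0 := by
        funext i
        have h1 : z i ^ 2 = 0 :=
          Finset.sum_eq_zero_iff_of_nonneg (fun j _ => sq_nonneg (z j)) |>.mp hz0.symm i
            (Finset.mem_univ i)
        exact pow_eq_zero_iff (n := 2) (by norm_num) |>.mp h1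
      subst hz'
      simp [hf, hS, dotProduct]
    · set r : ℝ := Real.sqrt (S z) with hr
      have hrpos : 0 < r := Real.sqrt_pos.mpr hzpos
      have hr2 : r ^ 2 = S z := Real.sq_sqrt (le_of_lt hzpos)
      set w : Fin n → ℝ := r⁻¹ • z with hw
      have hwK : w ∈ K := by
        show S w = 1
        rw [hS]
        simp only [hw, Pi.smul_apply, smul_eq_mul, mul_pow, ← Finset.mul_sum]
        rw [show ∑ i, z i ^ 2 = S z from rfl, ← hr2]
        field_simp
      have hfw : f w = r⁻¹ ^ 2 * f z := by
        simp only [hf, hw, smul_dotProduct, mulVec_smul, dotProduct_smul, smul_eq_mul]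
        ring
      have hmin : f z1 ≤ r⁻¹ ^ 2 * f z := hfw ▸ (hz1 hwK : f z1 ≤ f w)
      have hmax : r⁻¹ ^ 2 * f z ≤ f z2 := hfw ▸ (hz2 hwK : f w ≤ f z2)
      constructor
      · calc f z1 * S z = r ^ 2 * (f z1) := by rw [hr2]; ring
          _ ≤ r ^ 2 * (r⁻¹ ^ 2 * f z) :=
              mul_le_mul_of_nonneg_left hmin (le_of_lt (pow_pos hrpos 2))
          _ = f z := by field_simp
      · calc f z = r ^ 2 * (r⁻¹ ^ 2 * f z) := by field_simp
          _ ≤ r ^ 2 * f z2 := mul_le_mul_of_nonneg_left hmax (le_of_lt (pow_pos hrpos 2))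
          _ = f z2 * S z := by rw [hr2]; ring

theorem stmt_7 {n : ℕ} (A0 : Matrix (Fin n) (Fin n) ℝ) (B0 G : Fin n → ℝ)
    (R : ℝ) (hR : 0 < R)
    (Θ Q0 : Matrix (Fin n) (Fin n) ℝ) (hΘ : Θ.PosDef) (hΘs : Θ.IsSymm) (hQ0 : Q0.PosDef)
    -- Riccati equation A₀ᵀΘ + ΘA₀ − ΘB₀R⁻¹B₀ᵀΘ = −Q with Q = Q₀ + ‖R^{1/2}‖²GᵀG
    (hRic : A0ᵀ * Θ + Θ * A0 - R⁻¹ • vecMulVec (Θ.mulVec B0) (Θ.mulVec B0)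
      = -(Q0 + R • vecMulVec G G))
    (lam0 : ℝ) (hlam0 : 0 < lam0)
    (hlam0min : ∀ z : Fin n → ℝ, lam0 * (∑ i, (z i) ^ 2) ≤ z ⬝ᵥ Q0.mulVec z)
    (β : ℝ → (Fin n → ℝ) → ℝ) (hβ : ∀ t z, 0 ≤ β t z)
    (h : ℝ → (Fin n → ℝ) → ℝ) (hh : ∀ t z, |h t z| ≤ |G ⬝ᵥ z|)
    (x : ℝ → (Fin n → ℝ)) (p : ℝ → ℝ)
    (hp : ∀ t, p t = -R⁻¹ * (B0 ⬝ᵥ Θ.mulVec (x t)))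
    (hx : ∀ t, HasDerivAt x
      (A0.mulVec (x t) + (β t (x t) * p t) • B0 + (p t + h t (x t)) • B0) t) :
    (∀ t, deriv (fun s => x s ⬝ᵥ Θ.mulVec (x s)) t ≤ -(x t ⬝ᵥ Q0.mulVec (x t)) ∧
        -(x t ⬝ᵥ Q0.mulVec (x t)) ≤ -lam0 * ∑ i, (x t i) ^ 2) ∧
    (∃ C : ℝ, 0 < C ∧ ∃ α : ℝ, 0 < α ∧ ∀ t : ℝ, 0 ≤ t →
      Real.sqrt (∑ i, (x t i) ^ 2) ≤ C * Real.exp (-α * t) * Real.sqrt (∑ i, (x 0 i) ^ 2)) := by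
  -- the derivative of V
  set V : ℝ → ℝ := fun s => x s ⬝ᵥ Θ.mulVec (x s) with hV
  set D : ℝ → ℝ := fun t =>
    (A0.mulVec (x t) + (β t (x t) * p t) • B0 + (p t + h t (x t)) • B0) ⬝ᵥ Θ.mulVec (x t)
      + x t ⬝ᵥ Θ.mulVec (A0.mulVec (x t) + (β t (x t) * p t) • B0 + (p t + h t (x t)) • B0)
    with hD
  have hVd : ∀ t, HasDerivAt V (D t) t := fun t => quad_deriv Θ x _ t (hx t)
  -- the key pointwise inequality
  have hDle : ∀ t, D t ≤ -(x t ⬝ᵥ Q0.mulVec (x t)) := by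
    intro t
    simp only [hD]
    set z := x t with hz
    set bb := B0 ⬝ᵥ Θ.mulVec z with hbb
    set g := G ⬝ᵥ z with hg
    set u := Θ.mulVec B0 with hu
    have hsc : z ⬝ᵥ ((A0ᵀ * Θ + Θ * A0 - R⁻¹ • vecMulVec u u).mulVec z)
        = z ⬝ᵥ ((-(Q0 + R • vecMulVec G G)).mulVec z) := by rw [hRic]
    have e1 : z ⬝ᵥ ((A0ᵀ * Θ).mulVec z) = z ⬝ᵥ Θ.mulVec (A0.mulVec z) := by
      rw [← mulVec_mulVec, dotProduct_mulVec, vecMul_transpose]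
      exact symm_dot hΘs _ _
    have e2 : z ⬝ᵥ ((Θ * A0).mulVec z) = z ⬝ᵥ Θ.mulVec (A0.mulVec z) := by
      rw [← mulVec_mulVec]
    have e3 : u ⬝ᵥ z = bb := by
      rw [hu, hbb, dotProduct_comm]
      exact symm_dot hΘs _ _
    rw [sub_mulVec, add_mulVec, dotProduct_sub, dotProduct_add, e1, e2, smul_mulVec,
      dotProduct_smul, dv_vecMulVec, e3, neg_mulVec, dotProduct_neg, add_mulVec,
      dotProduct_add, smul_mulVec, dotProduct_smul, dv_vecMulVec, smul_eq_mul,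
      smul_eq_mul] at hsc
    have e4 : z ⬝ᵥ Θ.mulVec B0 = bb := by rw [hbb]; exact symm_dot hΘs _ _
    have e5 : (A0.mulVec z + (β t z * p t) • B0 + (p t + h t z) • B0) ⬝ᵥ Θ.mulVec z
        = z ⬝ᵥ Θ.mulVec (A0.mulVec z + (β t z * p t) • B0 + (p t + h t z) • B0) :=
      symm_dot hΘs _ _
    rw [e5, mulVec_add, mulVec_add, mulVec_smul, mulVec_smul, dotProduct_add, dotProduct_add,
      dotProduct_smul, dotProduct_smul, e4, smul_eq_mul, smul_eq_mul, hp, ← hz, ← hbb]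
    have habs : 2 * (h t z * bb) ≤ 2 * (|g| * |bb|) := by
      have h1 : h t z * bb ≤ |h t z * bb| := le_abs_self _
      rw [abs_mul] at h1
      have h2 : |h t z| * |bb| ≤ |g| * |bb| := mul_le_mul_of_nonneg_right (hh t z) (abs_nonneg _)
      linarith
    have hβ0 : 0 ≤ β t z := hβ t z
    have hRinv : 0 < R⁻¹ := inv_pos.mpr hR
    have hRR : R * R⁻¹ = 1 := mul_inv_cancel₀ (ne_of_gt hR)
    rw [← hg] at hsc
    have hsq : 0 ≤ R⁻¹ * (R * |g| - |bb|)^2 := mul_nonneg (le_of_lt hRinv) (sq_nonneg _)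
    have hexpand : R⁻¹ * (R * |g| - |bb|)^2
        = R * (|g| * |g|) + R⁻¹ * (|bb| * |bb|) - 2 * (|g| * |bb|) := by
      field_simp
      ring_nf
    have hamgm : 2 * (|g| * |bb|) ≤ R * (|g| * |g|) + R⁻¹ * (|bb| * |bb|) := by linarith
    have hg2 : g * g = |g| * |g| := (abs_mul_abs_self g).symm
    have hbb2 : bb * bb = |bb| * |bb| := (abs_mul_abs_self bb).symm
    nlinarith [mul_nonneg (mul_nonneg hβ0 (le_of_lt hRinv)) (mul_self_nonneg bb)]
  have hSnonneg : ∀ t, (0:ℝ) ≤ ∑ i, (x t i) ^ 2 :=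
    fun t => Finset.sum_nonneg fun i _ => sq_nonneg _
  refine ⟨fun t => ⟨?_, ?_⟩, ?_⟩
  · rw [(hVd t).deriv]
    exact hDle t
  · have := hlam0min (x t)
    linarith
  · obtain ⟨c1, c2, hc1, hc2, hb⟩ := quad_bounds Θ hΘ
    set a : ℝ := lam0 / c2 with ha
    have hapos : 0 < a := div_pos hlam0 hc2
    set W : ℝ → ℝ := fun t => V t * Real.exp (a * t) with hW
    have hexp : ∀ t : ℝ, HasDerivAt (fun s => Real.exp (a * s)) (Real.exp (a * t) * a) t := by
      intro t
      exact (Real.hasDerivAt_exp (a * t)).comp t (by simpa using (hasDerivAt_id t).const_mul a)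
    have hWd : ∀ t, HasDerivAt W (D t * Real.exp (a * t) + V t * (Real.exp (a * t) * a)) t :=
      fun t => (hVd t).mul (hexp t)
    have hWanti : Antitone W := by
      apply antitone_of_deriv_nonpos (fun t => (hWd t).differentiableAt)
      intro t
      rw [(hWd t).deriv]
      have h1 : D t ≤ -lam0 * ∑ i, (x t i) ^ 2 := by
        have := hlam0min (x t); have := hDle t; linarith
      have h2 : V t ≤ c2 * ∑ i, (x t i) ^ 2 := (hb (x t)).2
      have h3 : a * V t ≤ lam0 * ∑ i, (x t i) ^ 2 := by
        have := mul_le_mul_of_nonneg_left h2 (le_of_lt hapos)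
        have hac2 : a * c2 = lam0 := by rw [ha, div_mul_cancel₀ _ (ne_of_gt hc2)]
        calc a * V t ≤ a * (c2 * ∑ i, (x t i) ^ 2) := this
          _ = lam0 * ∑ i, (x t i) ^ 2 := by rw [← mul_assoc, hac2]
      have h4 : D t + a * V t ≤ 0 := by linarith
      have h5 : 0 < Real.exp (a * t) := Real.exp_pos _
      nlinarith
    refine ⟨Real.sqrt (c2 / c1), Real.sqrt_pos.mpr (div_pos hc2 hc1), a / 2,
      half_pos hapos, fun t ht => ?_⟩
    have hWt : V t * Real.exp (a * t) ≤ V 0 := by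
      have := hWanti ht
      simpa [hW] using this
    have hVt : V t ≤ Real.exp (-a * t) * V 0 := by
      have he : 0 < Real.exp (a * t) := Real.exp_pos _
      rw [neg_mul, Real.exp_neg]
      calc V t = (Real.exp (a * t))⁻¹ * (V t * Real.exp (a * t)) := by field_simp
        _ ≤ (Real.exp (a * t))⁻¹ * V 0 :=
            mul_le_mul_of_nonneg_left hWt (inv_nonneg.mpr he.le)
    have hlow : c1 * ∑ i, (x t i) ^ 2 ≤ V t := (hb (x t)).1
    have hhigh : V 0 ≤ c2 * ∑ i, (x 0 i) ^ 2 := (hb (x 0)).2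
    have hfinal : ∑ i, (x t i) ^ 2 ≤ (c2 / c1) * Real.exp (-a * t) * ∑ i, (x 0 i) ^ 2 := by
      have he : 0 < Real.exp (-a * t) := Real.exp_pos _
      have h6 : c1 * ∑ i, (x t i) ^ 2 ≤ Real.exp (-a * t) * (c2 * ∑ i, (x 0 i) ^ 2) :=
        hlow.trans (hVt.trans (mul_le_mul_of_nonneg_left hhigh (le_of_lt he)))
      rw [div_mul_eq_mul_div, div_mul_eq_mul_div, le_div_iff₀ hc1]
      calc (∑ i, (x t i) ^ 2) * c1 = c1 * ∑ i, (x t i) ^ 2 := by ring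
        _ ≤ Real.exp (-a * t) * (c2 * ∑ i, (x 0 i) ^ 2) := h6
        _ = c2 * Real.exp (-a * t) * ∑ i, (x 0 i) ^ 2 := by ring
    calc Real.sqrt (∑ i, (x t i) ^ 2)
        ≤ Real.sqrt ((c2 / c1) * Real.exp (-a * t) * ∑ i, (x 0 i) ^ 2) :=
          Real.sqrt_le_sqrt hfinal
      _ = Real.sqrt (c2 / c1) * Real.sqrt (Real.exp (-a * t)) * Real.sqrt (∑ i, (x 0 i) ^ 2) := by
          rw [Real.sqrt_mul (by positivity), Real.sqrt_mul (by positivity)]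
      _ = Real.sqrt (c2 / c1) * Real.exp (-(a / 2) * t) * Real.sqrt (∑ i, (x 0 i) ^ 2) := by
          rw [show -a * t = (-(a / 2) * t) + (-(a / 2) * t) by ring, Real.exp_add,
            Real.sqrt_mul_self (Real.exp_nonneg _)]
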